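/- Let E be a real normed vector space, A, B smooth (1,1) tensor fields on E, f : E → ℝ a smooth function, and X a vector field on E. Then [A, fB]_X = f·[A,B]_X + df(AX)·BX − df(X)·ABX, where df(Z) denotes the scalar function x ↦ Df(x)(Z(x)) and scalar functions multiply vector fields pointwise. -/

import Mathlib

variable {E : Type*} [NormedAddCommGroup E] [NormedSpace ℝ E]

/-- Lie bracket of vector fields on `E`: `[X,Y](x) = DY(x)(X(x)) − DX(x)(Y(x))`. -/
noncomputable def lie (X Y : E → E) : E → E :=
  fun x => fderiv ℝ Y x (X x) - fderiv ℝ X x (Y x)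

/-- Pointwise action of a (1,1) tensor field on a vector field. -/
def app (N : E → E →L[ℝ] E) (X : E → E) : E → E := fun x => N x (X x)

/-- Pointwise `k`-th power of a (1,1) tensor field. -/
def pw (N : E → E →L[ℝ] E) (k : ℕ) : E → E →L[ℝ] E := fun x => (N x) ^ k

/-- Frölicher–Nijenhuis bracket of two (1,1) tensor fields, evaluated on vector fields. -/
noncomputable def fnBracket (N₁ N₂ : E → E →L[ℝ] E) (X Y : E → E) : E → E :=
  fun x =>
    N₁ x (N₂ x (lie X Y x)) + N₂ x (N₁ x (lie X Y x))
      + lie (app N₁ X) (app N₂ Y) x + lie (app N₂ X) (app N₁ Y) x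
      - N₁ x (lie (app N₂ X) Y x + lie X (app N₂ Y) x)
      - N₂ x (lie (app N₁ X) Y x + lie X (app N₁ Y) x)

/-- Nijenhuis torsion of a (1,1) tensor field, evaluated on vector fields. -/
noncomputable def tor (N : E → E →L[ℝ] E) (X Y : E → E) : E → E :=
  fun x =>
    lie (app N X) (app N Y) x
      + N x (N x (lie X Y x) - lie (app N X) Y x - lie X (app N Y) x)

/-- Haantjes tensor of a (1,1) tensor field, evaluated on vector fields. -/
noncomputable def haan (M : E → E →L[ℝ] E) (X Y : E → E) : E → E :=
  fun x =>
    M x (M x (tor M X Y x)) + tor M (app M X) (app M Y) x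
      - M x (tor M (app M X) Y x + tor M X (app M Y) x)

/-- The bracket `[A,B]_X = [AX,BX] − A[X,BX] + B[X,AX]` of two (1,1) tensor fields
with respect to a vector field `X`. -/
noncomputable def brX (A B : E → E →L[ℝ] E) (X : E → E) : E → E :=
  fun x =>
    lie (app A X) (app B X) x - A x (lie X (app B X) x) + B x (lie X (app A X) x)

/-- A 1-form is closed iff its Fréchet derivative is symmetric. -/
def IsClosedOneForm (ρ : E → E →L[ℝ] ℝ) : Prop :=
  ∀ x u v, fderiv ℝ ρ x u v = fderiv ℝ ρ x v u

theorem stmt6 (A B : E → E →L[ℝ] E)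
    (hA : ContDiff ℝ (⊤ : ℕ∞) A) (hB : ContDiff ℝ (⊤ : ℕ∞) B)
    (f : E → ℝ) (hf : ContDiff ℝ (⊤ : ℕ∞) f)
    (X : E → E) (hX : ContDiff ℝ (⊤ : ℕ∞) X) (x : E) :
    brX A (fun p => f p • B p) X x
      = f x • brX A B X x + fderiv ℝ f x (A x (X x)) • B x (X x)
          - fderiv ℝ f x (X x) • A x (B x (X x)) := by
  have hBx : DifferentiableAt ℝ (fun p => B p (X p)) x :=
    (hB.differentiable (by simp) x).clm_apply (hX.differentiable (by simp) x)
  have hfx : DifferentiableAt ℝ f x := hf.differentiable (by simp) x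
  have happ : app (fun p => f p • B p) X = fun p => f p • B p (X p) := by
    funext p; simp [app]
  have key : fderiv ℝ (fun p => f p • B p (X p)) x
      = f x • fderiv ℝ (fun p => B p (X p)) x + (fderiv ℝ f x).smulRight (B x (X x)) :=
    fderiv_smul hfx hBx
  simp only [brX, lie, happ, app, key, ContinuousLinearMap.add_apply,
    ContinuousLinearMap.smul_apply, ContinuousLinearMap.smulRight_apply,
    map_add, map_sub, map_smul, smul_sub, smul_add]
  rw [show (fun p => (B p) (X p)) = app B X from rfl]
  abel
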